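/- Let X be a compactum. The maps nX : DX → IX and sX : IX → DX are mutually inverse bijections: nX ∘ sX = id on IX and sX ∘ nX = id on DX. -/

import Mathlib

/-- An idempotent (Maslov) probability measure on `X`:
a functional on `C(X, ℝ)` preserving constants, translation by constants,
and finite maxima. -/
def IsIdempotentMeasure {X : Type*} [TopologicalSpace X] (μ : C(X, ℝ) → ℝ) : Prop :=
  μ 1 = 1 ∧
  (∀ (l : ℝ) (φ : C(X, ℝ)), μ (ContinuousMap.const X l + φ) = l + μ φ) ∧
  (∀ ψ φ : C(X, ℝ), μ (ψ ⊔ φ) = max (μ ψ) (μ φ))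
/-- Membership in `DX`: an upper semicontinuous function `X → [-∞, 0]`
attaining the maximal value `0`. -/
def MemD {X : Type*} [TopologicalSpace X] (f : X → EReal) : Prop :=
  UpperSemicontinuous f ∧ (∀ x, f x ≤ 0) ∧ ∃ x, f x = 0
/-- The density `sX(μ)` of a functional `μ`:
`sX(μ)(x) = inf { μ(φ) : φ ∈ C(X,(-∞,0]), φ(x) = 0 }`, computed in `ℝ ∪ {-∞}`. -/
noncomputable def sFun {X : Type*} [TopologicalSpace X] (μ : C(X, ℝ) → ℝ) (x : X) : EReal :=
  ⨅ φ : {φ : C(X, ℝ) // (∀ y, φ y ≤ 0) ∧ φ x = 0}, ((μ φ.1 : ℝ) : EReal)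

open Set

private lemma finset_sup'_mu {X : Type*} [TopologicalSpace X] {μ : C(X, ℝ) → ℝ}
    (h3 : ∀ ψ φ : C(X, ℝ), μ (ψ ⊔ φ) = max (μ ψ) (μ φ))
    {ι : Type*} {t : Finset ι} (ht : t.Nonempty) (F : ι → C(X, ℝ)) :
    μ (t.sup' ht F) = t.sup' ht fun i => μ (F i) := by
  induction ht using Finset.Nonempty.cons_induction with
  | singleton a => simp
  | cons a s h hs ih => rw [Finset.sup'_cons hs, Finset.sup'_cons hs, h3, ih]

/-- For a compactum `X`, the maps `nX : DX → IX` and `sX : IX → DX`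
are mutually inverse: `nX ∘ sX = id` on `IX` and `sX ∘ nX = id` on `DX`. -/
theorem stmt2 {X : Type*} [TopologicalSpace X] [CompactSpace X] [T2Space X] :
    (∀ μ : C(X, ℝ) → ℝ, IsIdempotentMeasure μ →
        ∀ φ : C(X, ℝ), ((μ φ : ℝ) : EReal) = ⨆ x, sFun μ x + (φ x : EReal)) ∧
    (∀ f : X → EReal, MemD f →
        ∀ x : X, sFun (fun φ : C(X, ℝ) => (⨆ y, f y + (φ y : EReal)).toReal) x = f x) := by
  constructor
  · rintro μ ⟨h1, h2, h3⟩ φ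
    by_cases hX : Nonempty X
    swap
    · exfalso
      have e : (ContinuousMap.const X 1 + 0 : C(X, ℝ)) = 0 := by
        ext y; exact absurd ⟨y⟩ hX
      have h := h2 1 0
      rw [e] at h; linarith
    -- basic consequences of the axioms
    have hmono : ∀ ψ χ : C(X, ℝ), ψ ≤ χ → μ ψ ≤ μ χ := by
      intro ψ χ h
      have e : ψ ⊔ χ = χ := sup_eq_right.mpr h
      have h' := h3 ψ χ
      rw [e] at h'
      rw [h']; exact le_max_left _ _
    -- upper bound direction : each sFun μ x + φ x ≤ μ φ
    have hub : ∀ x, sFun μ x + (φ x : EReal) ≤ ((μ φ : ℝ) : EReal) := by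
      intro x
      set ψ : C(X, ℝ) := (φ - ContinuousMap.const X (φ x)) ⊓ 0 with hψdef
      have hψ0 : ∀ y, ψ y ≤ 0 := by
        intro y
        simp [hψdef, min_le_right]
      have hψx : ψ x = 0 := by simp [hψdef]
      have hμψ : μ ψ ≤ μ φ - φ x := by
        have hle : ψ ≤ φ - ContinuousMap.const X (φ x) := inf_le_left
        have e : φ - ContinuousMap.const X (φ x) = ContinuousMap.const X (-(φ x)) + φ := by
          ext y; simp; ring
        have h := hmono _ _ hle
        rw [e, h2] at h; linarith
      have hsf : sFun μ x ≤ ((μ φ - φ x : ℝ) : EReal) :=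
        le_trans (iInf_le _ ⟨ψ, hψ0, hψx⟩) (by exact_mod_cast hμψ)
      calc sFun μ x + (φ x : EReal) ≤ ((μ φ - φ x : ℝ) : EReal) + (φ x : EReal) :=
            add_le_add_left hsf _
        _ = ((μ φ : ℝ) : EReal) := by rw [← EReal.coe_add]; norm_num
    -- the key compactness estimate
    have key : ∀ r : ℝ, (⨆ x, sFun μ x + (φ x : EReal)) < (r : EReal) → μ φ ≤ r := by
      intro r hr
      have hx : ∀ x : X, ∃ ψ : {ψ : C(X, ℝ) // (∀ y, ψ y ≤ 0) ∧ ψ x = 0},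
          μ ψ.1 < r - φ x := by
        intro x
        have h1x : sFun μ x + (φ x : EReal) < (r : EReal) :=
          lt_of_le_of_lt (le_iSup (fun x => sFun μ x + (φ x : EReal)) x) hr
        have h2x : sFun μ x < ((r - φ x : ℝ) : EReal) := by
          by_contra hc
          push_neg at hc
          have h := add_le_add_left hc ((φ x:ℝ):EReal)
          rw [← EReal.coe_add, sub_add_cancel] at h
          exact absurd (lt_of_le_of_lt h h1x) (lt_irrefl _)
        have h3x : (⨅ ψ : {ψ : C(X, ℝ) // (∀ y, ψ y ≤ 0) ∧ ψ x = 0},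
            ((μ ψ.1 : ℝ) : EReal)) < ((r - φ x : ℝ) : EReal) := h2x
        obtain ⟨ψ, hψ⟩ := iInf_lt_iff.mp h3x
        exact ⟨ψ, by exact_mod_cast hψ⟩
      choose Ψ hΨ using hx
      have hε : ∀ ε : ℝ, 0 < ε → μ φ ≤ r + 2 * ε := by
        intro ε hεpos
        set U : X → Set X := fun x => {y | φ y < φ x + ε} ∩ {y | -ε < (Ψ x).1 y} with hU
        have hUopen : ∀ x, IsOpen (U x) := fun x =>
          (isOpen_lt (map_continuous φ) continuous_const).inter
            (isOpen_lt continuous_const (map_continuous (Ψ x).1))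
        have hcover : (univ : Set X) ⊆ ⋃ x, U x := by
          intro y _
          refine mem_iUnion.2 ⟨y, ⟨by simp [hεpos], ?_⟩⟩
          show -ε < (Ψ y).1 y
          rw [(Ψ y).2.2]; linarith
        obtain ⟨t, htc⟩ := isCompact_univ.elim_finite_subcover U hUopen hcover
        have ht : t.Nonempty := by
          obtain ⟨i, hi, -⟩ := mem_iUnion₂.mp (htc (mem_univ hX.some))
          exact ⟨i, hi⟩
        set F : X → C(X, ℝ) := fun i => ContinuousMap.const X (φ i + ε) + (Ψ i).1 with hF
        set χ : C(X, ℝ) := t.sup' ht F with hχ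
        have hpt : φ ≤ ContinuousMap.const X ε + χ := by
          rw [ContinuousMap.le_def]
          intro y
          obtain ⟨i, hi, hyi⟩ := mem_iUnion₂.mp (htc (mem_univ y))
          have hy1 : φ y < φ i + ε := hyi.1
          have hy2 : -ε < (Ψ i).1 y := hyi.2
          have hFy : F i y ≤ χ y := by
            rw [hχ, ContinuousMap.sup'_apply]
            exact Finset.le_sup' (fun j => F j y) hi
          have hFiy : F i y = φ i + ε + (Ψ i).1 y := by simp [hF]
          have : (ContinuousMap.const X ε + χ) y = ε + χ y := by simp
          rw [this]
          have := hFy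
          rw [hFiy] at this
          linarith
        have h5 : μ φ ≤ ε + μ χ := by
          have h := hmono _ _ hpt
          rwa [h2] at h
        have h6 : μ χ ≤ r + ε := by
          rw [hχ, finset_sup'_mu h3 ht F]
          apply Finset.sup'_le
          intro i _
          rw [hF]
          show μ (ContinuousMap.const X (φ i + ε) + (Ψ i).1) ≤ r + ε
          rw [h2]
          have := hΨ i
          linarith
        linarith
      by_contra hc
      push_neg at hc
      have := hε ((μ φ - r) / 4) (by linarith)
      linarith
    refine le_antisymm ?_ (iSup_le hub)
    by_contra hc
    push_neg at hc
    obtain ⟨r, hr1, hr2⟩ := EReal.exists_between_coe_real hc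
    have : r < μ φ := by exact_mod_cast hr2
    exact absurd (key r hr1) (not_le.mpr this)
  · rintro f ⟨husc, hle, x0, hx0⟩ x
    set μ : C(X, ℝ) → ℝ := fun φ => (⨆ y, f y + (φ y : EReal)).toReal with hμ
    have hS : ∀ φ : C(X, ℝ), ((μ φ : ℝ) : EReal) = ⨆ y, f y + (φ y : EReal) := by
      intro φ
      apply EReal.coe_toReal
      · refine ne_top_of_le_ne_top (EReal.coe_ne_top ‖φ‖) (iSup_le fun y => ?_)
        calc f y + (φ y : EReal) ≤ 0 + (‖φ‖ : EReal) := by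
              refine add_le_add (hle y) ?_
              exact_mod_cast (le_abs_self _).trans
                ((Real.norm_eq_abs (φ y)) ▸ φ.norm_coe_le_norm y)
          _ = (‖φ‖ : EReal) := zero_add _
      · have hbd : (φ x0 : EReal) ≤ ⨆ y, f y + (φ y : EReal) := by
          have h := le_iSup (fun y => f y + (φ y : EReal)) x0
          rwa [hx0, zero_add] at h
        intro hb
        rw [hb] at hbd
        exact EReal.coe_ne_bot _ (le_bot_iff.mp hbd)
    apply le_antisymm
    · -- sFun μ x ≤ f x
      refine le_of_forall_gt_imp_ge_of_dense fun a ha => ?_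
      obtain ⟨r, hr1, hr2⟩ := EReal.exists_between_coe_real ha
      refine le_trans ?_ hr2.le
      rcases le_or_gt 0 r with hr0 | hr0
      · -- take ψ = 0
        refine le_trans (iInf_le _ ⟨0, fun y => le_of_eq (ContinuousMap.zero_apply y),
          ContinuousMap.zero_apply x⟩) ?_
        rw [hS]
        refine le_trans (iSup_le fun y => ?_) (EReal.coe_nonneg.mpr hr0)
        simpa using hle y
      · -- Urysohn
        have hUopen : IsOpen (f ⁻¹' Iio (r : EReal)) :=
          upperSemicontinuous_iff_isOpen_preimage.mp husc _
        have hxU : x ∈ f ⁻¹' Iio (r : EReal) := hr1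
        obtain ⟨g, hg0, hg1, hg01⟩ := exists_continuous_zero_one_of_isClosed
          isClosed_singleton hUopen.isClosed_compl
          (disjoint_singleton_left.mpr (by simpa using hxU))
        set ψ : C(X, ℝ) := r • g with hψdef
        have hψ0 : ∀ y, ψ y ≤ 0 := by
          intro y
          have := (hg01 y).1
          simp only [hψdef, ContinuousMap.smul_apply, smul_eq_mul]
          exact mul_nonpos_of_nonpos_of_nonneg hr0.le this
        have hψx : ψ x = 0 := by
          have : g x = 0 := hg0 (mem_singleton x)
          simp [hψdef, this]
        refine le_trans (iInf_le _ ⟨ψ, hψ0, hψx⟩) ?_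
        rw [hS]
        refine iSup_le fun y => ?_
        by_cases hy : y ∈ f ⁻¹' Iio (r : EReal)
        · calc f y + (ψ y : EReal) ≤ f y + 0 := by
                refine add_le_add le_rfl ?_
                exact_mod_cast hψ0 y
            _ = f y := add_zero _
            _ ≤ (r : EReal) := (le_of_lt hy)
        · have hgy : g y = 1 := hg1 hy
          have hψy : ψ y = r := by simp [hψdef, hgy]
          calc f y + (ψ y : EReal) ≤ 0 + (r : EReal) := by
                refine add_le_add (hle y) ?_
                rw [hψy]
            _ = (r : EReal) := zero_add _
    · -- f x ≤ sFun μ x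
      refine le_iInf fun ψ => ?_
      rw [hS]
      have h := le_iSup (fun y => f y + ((ψ : C(X, ℝ)) y : EReal)) x
      rw [ψ.2.2] at h
      simpa using h
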